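/- Let ρA, ρB ∈ Ω_n. The coupling set Γ^Q(ρA, ρB) contains a matrix R of rank one if and only if ρA and ρB are isospectral, i.e., if and only if there exists a unitary n×n complex matrix U with ρB = U * ρA * Uᴴ. -/

import Mathlib

set_option synthInstance.maxHeartbeats 1000000
set_option maxHeartbeats 2000000

open Matrix ComplexOrder

/-- A density matrix: positive semidefinite with trace one. -/
def IsDensityMatrix {k : Type*} [Fintype k] [DecidableEq k] (ρ : Matrix k k ℂ) : Prop :=
  ρ.PosSemidef ∧ ρ.trace = 1

/-- Partial trace over the second factor. -/
noncomputable def trB {m n : ℕ} (R : Matrix (Fin m × Fin n) (Fin m × Fin n) ℂ) :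
    Matrix (Fin m) (Fin m) ℂ :=
  Matrix.of fun i j => ∑ p, R (i, p) (j, p)

/-- Partial trace over the first factor. -/
noncomputable def trA {m n : ℕ} (R : Matrix (Fin m × Fin n) (Fin m × Fin n) ℂ) :
    Matrix (Fin n) (Fin n) ℂ :=
  Matrix.of fun p q => ∑ i, R (i, p) (i, q)

/-- The set of quantum couplings of two density matrices. -/
def QCouplings {m n : ℕ} (ρA : Matrix (Fin m) (Fin m) ℂ) (ρB : Matrix (Fin n) (Fin n) ℂ) :
    Set (Matrix (Fin m × Fin n) (Fin m × Fin n) ℂ) :=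
  {R | IsDensityMatrix R ∧ trB R = ρA ∧ trA R = ρB}

/-- The quantum optimal transport cost. -/
noncomputable def QOT {m n : ℕ} (C : Matrix (Fin m × Fin n) (Fin m × Fin n) ℂ)
    (ρA : Matrix (Fin m) (Fin m) ℂ) (ρB : Matrix (Fin n) (Fin n) ℂ) : ℝ :=
  sInf ((fun R => ((C * R).trace).re) '' QCouplings ρA ρB)

namespace QOTAux

open Polynomial

variable {k : Type*} [Fintype k] [DecidableEq k]

/-! ### Characteristic polynomial tools -/

lemma det_smul_one_sub_mul_comm {F : Type*} [Field F] (t : F) (ht : t ≠ 0)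
    (A B : Matrix k k F) :
    (t • (1 : Matrix k k F) - A * B).det = (t • (1 : Matrix k k F) - B * A).det := by
  have key : ∀ A B : Matrix k k F, t • (1 : Matrix k k F) - A * B
      = t • ((1 : Matrix k k F) - A * (t⁻¹ • B)) := by
    intro A B
    rw [smul_sub, Matrix.mul_smul, smul_smul, mul_inv_cancel₀ ht, one_smul]
  rw [key A B, key B A, Matrix.det_smul, Matrix.det_smul,
    Matrix.det_one_sub_mul_comm, Matrix.smul_mul, ← Matrix.mul_smul]

/-- `AB` and `BA` have the same characteristic polynomial. -/
lemma charpoly_mul_comm (A B : Matrix k k ℂ) :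
    (A * B).charpoly = (B * A).charpoly := by
  set ev : ℂ[X] →+* RatFunc ℂ := (algebraMap ℂ[X] (RatFunc ℂ) : ℂ[X] →+* RatFunc ℂ) with hev
  have hinj : Function.Injective ev := IsFractionRing.injective ℂ[X] (RatFunc ℂ)
  apply hinj
  have hmapchar : ∀ M : Matrix k k ℂ, ev M.charpoly
      = (ev X • (1 : Matrix k k (RatFunc ℂ)) - M.map (ev.comp Polynomial.C)).det := by
    intro M
    rw [Matrix.charpoly, RingHom.map_det]
    congr 1
    ext i j
    by_cases h : i = j
    · subst h
      simp [Matrix.charmatrix_apply_eq, Matrix.one_apply, Matrix.smul_apply]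
    · simp [Matrix.charmatrix_apply_ne _ _ _ h, Matrix.one_apply_ne h, Matrix.smul_apply, h]
  have ht : ev X ≠ 0 := fun h => Polynomial.X_ne_zero (hinj (h.trans (map_zero ev).symm))
  have hmul : ∀ M N : Matrix k k ℂ, (M * N).map (ev.comp Polynomial.C)
      = M.map (ev.comp Polynomial.C) * N.map (ev.comp Polynomial.C) := fun M N =>
    Matrix.map_mul
  rw [hmapchar, hmapchar, hmul, hmul, det_smul_one_sub_mul_comm _ ht]

lemma charpoly_transpose (M : Matrix k k ℂ) : Mᵀ.charpoly = M.charpoly := by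
  have : charmatrix Mᵀ = (charmatrix M)ᵀ := by
    ext i j
    by_cases h : i = j
    · subst h; simp
    · simp [Matrix.charmatrix_apply_ne _ _ _ h,
        Matrix.charmatrix_apply_ne _ _ _ (Ne.symm h), Matrix.transpose_apply]
  rw [Matrix.charpoly, this, Matrix.det_transpose, Matrix.charpoly]

lemma charpoly_unitary_conj {U A : Matrix k k ℂ} (hU : Uᴴ * U = 1) :
    (U * A * Uᴴ).charpoly = A.charpoly := by
  rw [charpoly_mul_comm (U * A) Uᴴ, ← Matrix.mul_assoc, hU, Matrix.one_mul]

lemma charpoly_diagonal (d : k → ℂ) :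
    (diagonal d).charpoly = ∏ i, (X - C (d i)) := by
  have : charmatrix (diagonal d) = diagonal (fun i => X - C (d i)) := by
    ext i j
    by_cases h : i = j
    · subst h; simp
    · simp [Matrix.charmatrix_apply_ne _ _ _ h, Matrix.diagonal_apply_ne _ h]
  rw [Matrix.charpoly, this, Matrix.det_diagonal]

lemma charpoly_hermitian {A : Matrix k k ℂ} (hA : A.IsHermitian) :
    A.charpoly = ∏ i, (X - C ((hA.eigenvalues i : ℝ) : ℂ)) := by
  have hU : (hA.eigenvectorUnitary : Matrix k k ℂ)ᴴ * (hA.eigenvectorUnitary : Matrix k k ℂ)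
      = 1 := by
    simpa [Matrix.star_eq_conjTranspose] using
      (Matrix.mem_unitaryGroup_iff'.mp hA.eigenvectorUnitary.2)
  calc A.charpoly
      = ((hA.eigenvectorUnitary : Matrix k k ℂ) * diagonal (RCLike.ofReal ∘ hA.eigenvalues)
        * (hA.eigenvectorUnitary : Matrix k k ℂ)ᴴ).charpoly := by
        congr 1
        conv_lhs => rw [hA.spectral_theorem]
        rw [Unitary.conjStarAlgAut_apply, Matrix.star_eq_conjTranspose]
    _ = (diagonal (RCLike.ofReal ∘ hA.eigenvalues)).charpoly := charpoly_unitary_conj hU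
    _ = ∏ i, (X - C ((hA.eigenvalues i : ℝ) : ℂ)) := by rw [charpoly_diagonal]; rfl

/-! ### From equal multisets to a permutation -/

lemma exists_comp_perm_eq {n : ℕ} {α : Type*} [LinearOrder α] (a b : Fin n → α)
    (h : (↑(List.ofFn a) : Multiset α) = ↑(List.ofFn b)) :
    ∃ σ : Equiv.Perm (Fin n), a ∘ σ = b := by
  have hperm : List.Perm (List.ofFn a) (List.ofFn b) := Multiset.coe_eq_coe.mp h
  have h1 : List.Perm (List.ofFn (a ∘ Tuple.sort a)) (List.ofFn (b ∘ Tuple.sort b)) :=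
    ((Equiv.Perm.ofFn_comp_perm _ a).trans hperm).trans
      (Equiv.Perm.ofFn_comp_perm _ b).symm
  have heq : List.ofFn (a ∘ Tuple.sort a) = List.ofFn (b ∘ Tuple.sort b) :=
    List.Perm.eq_of_sortedLE
      ((Tuple.monotone_sort a).sortedLE_ofFn) ((Tuple.monotone_sort b).sortedLE_ofFn) h1
  have heq' : a ∘ Tuple.sort a = b ∘ Tuple.sort b := List.ofFn_injective heq
  refine ⟨(Tuple.sort b).symm.trans (Tuple.sort a), funext fun i => ?_⟩
  have := congrFun heq' ((Tuple.sort b).symm i)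
  simpa using this

/-! ### Permutation matrices -/

lemma perm_diag_conj {n : ℕ} (σ : Equiv.Perm (Fin n)) (d : Fin n → ℂ) :
    let E : Matrix (Fin n) (Fin n) ℂ := σ.toPEquiv.toMatrix
    E * diagonal d * Eᴴ = diagonal (d ∘ σ) ∧ Eᴴ * E = 1 := by
  intro E
  have hE : E = (1 : Matrix (Fin n) (Fin n) ℂ).submatrix σ id := by
    rw [← Matrix.mul_one E]
    exact PEquiv.toMatrix_toPEquiv_mul σ 1
  have hEH : Eᴴ = σ.symm.toPEquiv.toMatrix := by
    ext i j
    rw [Matrix.conjTranspose_apply, hE]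
    rw [PEquiv.toMatrix_toPEquiv_apply, Pi.single_apply]
    simp only [Matrix.submatrix_apply, id_eq, Matrix.one_apply]
    by_cases h : σ j = i
    · rw [if_pos h, if_pos (by simp [← h]), star_one]
    · rw [if_neg h, if_neg (fun hh => h (by subst hh; simp)), star_zero]
  constructor
  · rw [hEH, PEquiv.mul_toMatrix_toPEquiv, PEquiv.toMatrix_toPEquiv_mul]
    ext i j
    simp only [Equiv.symm_symm, Matrix.submatrix_apply, id_eq]
    by_cases h : i = j
    · subst h; simp
    · rw [Matrix.diagonal_apply_ne _ (fun hh : σ i = σ j => h (σ.injective hh)),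
        Matrix.diagonal_apply_ne _ h]
  · rw [hEH, PEquiv.toMatrix_toPEquiv_mul, hE]
    ext i j
    simp [Matrix.submatrix_apply, Matrix.one_apply, Equiv.symm_apply_eq]

lemma roots_prod_fin {n : ℕ} (f : Fin n → ℂ) :
    (∏ i, (X - C (f i))).roots = ↑(List.ofFn f) := by
  have h1 : ∏ i, (X - C (f i))
      = (Multiset.map (fun r => X - C r) (Finset.univ.val.map f)).prod := by
    rw [Multiset.map_map]
    rfl
  rw [h1, Polynomial.roots_multiset_prod_X_sub_C, Fin.univ_val_map]

/-- Hermitian matrices with the same characteristic polynomial are unitarily equivalent. -/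
lemma hermitian_similar_of_charpoly {n : ℕ} {A B : Matrix (Fin n) (Fin n) ℂ}
    (hA : A.IsHermitian) (hB : B.IsHermitian) (h : A.charpoly = B.charpoly) :
    ∃ U : Matrix (Fin n) (Fin n) ℂ, Uᴴ * U = 1 ∧ B = U * A * Uᴴ := by
  have hmul : (↑(List.ofFn (fun i => ((hA.eigenvalues i : ℝ) : ℂ))) : Multiset ℂ)
      = ↑(List.ofFn (fun i => ((hB.eigenvalues i : ℝ) : ℂ))) := by
    rw [← roots_prod_fin, ← roots_prod_fin, ← charpoly_hermitian hA,
      ← charpoly_hermitian hB, h]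
  have hmulR : (↑(List.ofFn hA.eigenvalues) : Multiset ℝ) = ↑(List.ofFn hB.eigenvalues) := by
    apply Multiset.map_injective Complex.ofReal_injective
    rw [Multiset.map_coe, Multiset.map_coe, List.map_ofFn, List.map_ofFn]
    exact hmul
  obtain ⟨σ, hσ⟩ := exists_comp_perm_eq hA.eigenvalues hB.eigenvalues hmulR
  set P : Matrix (Fin n) (Fin n) ℂ := (hA.eigenvectorUnitary : Matrix (Fin n) (Fin n) ℂ)
  set Q : Matrix (Fin n) (Fin n) ℂ := (hB.eigenvectorUnitary : Matrix (Fin n) (Fin n) ℂ)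
  set E : Matrix (Fin n) (Fin n) ℂ := σ.toPEquiv.toMatrix
  obtain ⟨hEdiag, hEunit⟩ := perm_diag_conj σ (RCLike.ofReal ∘ hA.eigenvalues)
  have hPl : Pᴴ * P = 1 := by
    simpa [Matrix.star_eq_conjTranspose] using Matrix.mem_unitaryGroup_iff'.mp
      hA.eigenvectorUnitary.2
  have hPr : P * Pᴴ = 1 := by
    simpa [Matrix.star_eq_conjTranspose] using Matrix.mem_unitaryGroup_iff.mp
      hA.eigenvectorUnitary.2
  have hQl : Qᴴ * Q = 1 := by
    simpa [Matrix.star_eq_conjTranspose] using Matrix.mem_unitaryGroup_iff'.mp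
      hB.eigenvectorUnitary.2
  have cancel : ∀ {X Y : Matrix (Fin n) (Fin n) ℂ} (Z : Matrix (Fin n) (Fin n) ℂ),
      X * Y = 1 → X * (Y * Z) = Z := by
    intro X Y Z hXY; rw [← Matrix.mul_assoc, hXY, Matrix.one_mul]
  refine ⟨Q * E * Pᴴ, ?_, ?_⟩
  · simp only [Matrix.conjTranspose_mul, Matrix.conjTranspose_conjTranspose]
    simp only [Matrix.mul_assoc]
    rw [cancel _ hQl, cancel _ hEunit, hPr]
  · have hDB : diagonal (RCLike.ofReal ∘ hB.eigenvalues)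
        = E * diagonal (RCLike.ofReal ∘ hA.eigenvalues) * Eᴴ := by
      rw [hEdiag]
      ext i
      simp only [Function.comp_apply, ← hσ]
      rfl
    have hDA : diagonal (RCLike.ofReal ∘ hA.eigenvalues) = Pᴴ * A * P := by
      rw [← hA.conjStarAlgAut_star_eigenvectorUnitary]
      simp [Matrix.star_eq_conjTranspose, P]
    calc B = Q * diagonal (RCLike.ofReal ∘ hB.eigenvalues) * Qᴴ := by
            conv_lhs => rw [hB.spectral_theorem]
            rw [Unitary.conjStarAlgAut_apply, Matrix.star_eq_conjTranspose]
      _ = Q * (E * (Pᴴ * A * P) * Eᴴ) * Qᴴ := by rw [hDB, hDA]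
      _ = (Q * E * Pᴴ) * A * (Q * E * Pᴴ)ᴴ := by
            simp only [Matrix.conjTranspose_mul, Matrix.conjTranspose_conjTranspose,
              Matrix.mul_assoc]

/-! ### Rank-one positive semidefinite matrices -/

lemma psd_rank_one_decomp {R : Matrix k k ℂ} (hR : R.PosSemidef) (hrank : R.rank = 1) :
    ∃ ψ : k → ℂ, R = vecMulVec ψ (star ψ) := by
  have hH := hR.1
  have hcard : Fintype.card {i // hH.eigenvalues i ≠ 0} = 1 := by
    rw [← hH.rank_eq_card_non_zero_eigs, hrank]
  obtain ⟨i₀, hi₀⟩ := Fintype.card_eq_one_iff.mp hcard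
  have hzero : ∀ j : k, j ≠ i₀.1 → hH.eigenvalues j = 0 := by
    intro j hj
    by_contra hne
    exact hj (congrArg Subtype.val (hi₀ ⟨j, hne⟩))
  have hnonneg : 0 ≤ hH.eigenvalues i₀.1 := hR.eigenvalues_nonneg i₀.1
  set V : Matrix k k ℂ := (hH.eigenvectorUnitary : Matrix k k ℂ)
  refine ⟨fun i => (Real.sqrt (hH.eigenvalues i₀.1) : ℂ) * V i i₀.1, ?_⟩
  have hspec := hH.spectral_theorem
  ext i j
  rw [vecMulVec_apply]
  have : R i j = ∑ l, V i l * ((hH.eigenvalues l : ℝ) : ℂ) * star (V j l) := by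
    conv_lhs => rw [hspec]
    rw [Unitary.conjStarAlgAut_apply, Matrix.mul_apply]
    refine Finset.sum_congr rfl fun l _ => ?_
    rw [Matrix.mul_diagonal, Matrix.star_apply]
    rfl
  rw [this, Finset.sum_eq_single i₀.1]
  · have hs : ((Real.sqrt (hH.eigenvalues i₀.1) : ℂ)) * (Real.sqrt (hH.eigenvalues i₀.1) : ℂ)
        = ((hH.eigenvalues i₀.1 : ℝ) : ℂ) := by
      rw [← Complex.ofReal_mul, Real.mul_self_sqrt hnonneg]
    simp only [Pi.star_apply, star_mul', Complex.star_def, Complex.conj_ofReal]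
    rw [← hs]
    ring
  · intro l _ hl
    rw [hzero l hl]
    simp
  · intro hmem
    exact absurd (Finset.mem_univ _) hmem

lemma posSemidef_vecMulVec_star (ψ : k → ℂ) : (vecMulVec ψ (star ψ)).PosSemidef := by
  refine Matrix.PosSemidef.of_dotProduct_mulVec_nonneg ?_ ?_
  · ext i j
    simp only [Matrix.conjTranspose_apply, vecMulVec_apply, Pi.star_apply, star_mul', star_star]
    exact mul_comm _ _
  · intro x
    have h1 : star x ⬝ᵥ (vecMulVec ψ (star ψ) *ᵥ x)
        = (∑ i, star (x i) * ψ i) * ∑ j, star (ψ j) * x j := by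
      simp only [Matrix.mulVec, dotProduct, vecMulVec_apply, Pi.star_apply,
        Finset.mul_sum, Finset.sum_mul]
      rw [Finset.sum_comm]
      refine Finset.sum_congr rfl fun i _ => Finset.sum_congr rfl fun j _ => by ring
    have h2 : ∑ j, star (ψ j) * x j = star (∑ i, star (x i) * ψ i) := by
      rw [star_sum]
      refine Finset.sum_congr rfl fun j _ => by simp [mul_comm]
    rw [h1, h2]
    exact mul_star_self_nonneg _

lemma rank_vecMulVec_star (ψ : k → ℂ) (hψ : ψ ≠ 0) : (vecMulVec ψ (star ψ)).rank = 1 := by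
  have hle : (vecMulVec ψ (star ψ)).rank ≤ 1 := by
    rw [Matrix.vecMulVec_eq (Fin 1)]
    exact (Matrix.rank_mul_le_left _ _).trans
      ((Matrix.rank_le_card_width _).trans (by simp))
  have hne : vecMulVec ψ (star ψ) ≠ 0 := by
    obtain ⟨i, hi⟩ := Function.ne_iff.mp hψ
    intro h0
    have := congrFun (congrFun h0 i) i
    simp only [vecMulVec_apply, Pi.star_apply, Matrix.zero_apply] at this
    exact (mul_ne_zero hi (star_ne_zero.mpr hi)) this
  have hpos : (vecMulVec ψ (star ψ)).rank ≠ 0 := by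
    intro h0
    apply hne
    have hbot : LinearMap.range (vecMulVec ψ (star ψ)).mulVecLin = ⊥ :=
      Submodule.finrank_eq_zero.mp h0
    have hlin : (vecMulVec ψ (star ψ)).mulVecLin = 0 := LinearMap.range_eq_bot.mp hbot
    ext i j
    have := congrFun (congrArg DFunLike.coe hlin) (Pi.single j 1)
    have h2 := congrFun this i
    simpa [Matrix.mulVecLin_apply] using h2
  omega

/-! ### Partial traces of pure states -/

lemma trB_vecMulVec {m n : ℕ} (M : Matrix (Fin m) (Fin n) ℂ) :
    trB (vecMulVec (fun x : Fin m × Fin n => M x.1 x.2)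
      (star fun x : Fin m × Fin n => M x.1 x.2)) = M * Mᴴ := by
  ext i j
  simp [trB, Matrix.mul_apply, vecMulVec_apply, Matrix.conjTranspose_apply]

lemma trA_vecMulVec {m n : ℕ} (M : Matrix (Fin m) (Fin n) ℂ) :
    trA (vecMulVec (fun x : Fin m × Fin n => M x.1 x.2)
      (star fun x : Fin m × Fin n => M x.1 x.2)) = Mᵀ * (Mᵀ)ᴴ := by
  ext p q
  simp [trA, Matrix.mul_apply, vecMulVec_apply, Matrix.conjTranspose_apply,
    Matrix.transpose_apply]

lemma trace_vecMulVec {m n : ℕ} (M : Matrix (Fin m) (Fin n) ℂ) :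
    (vecMulVec (fun x : Fin m × Fin n => M x.1 x.2)
      (star fun x : Fin m × Fin n => M x.1 x.2)).trace = (M * Mᴴ).trace := by
  rw [Matrix.trace, Matrix.trace]
  rw [show (Finset.univ : Finset (Fin m × Fin n)).sum
        (vecMulVec (fun x : Fin m × Fin n => M x.1 x.2)
          (star fun x : Fin m × Fin n => M x.1 x.2)).diag
      = ∑ x : Fin m × Fin n, M x.1 x.2 * star (M x.1 x.2) from
    Finset.sum_congr rfl fun x _ => by simp [Matrix.diag, vecMulVec_apply]]
  rw [Fintype.sum_prod_type]
  refine Finset.sum_congr rfl fun i _ => ?_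
  simp [Matrix.diag, Matrix.mul_apply, Matrix.conjTranspose_apply]

end QOTAux

/-- the coupling set contains a rank-one matrix iff the two density
matrices are isospectral (unitarily equivalent). -/
theorem rank_one_coupling_iff_isospectral (n : ℕ)
    (ρA ρB : Matrix (Fin n) (Fin n) ℂ)
    (hA : IsDensityMatrix ρA) (hB : IsDensityMatrix ρB) :
    (∃ R ∈ QCouplings ρA ρB, R.rank = 1) ↔
      ∃ U : Matrix (Fin n) (Fin n) ℂ, Uᴴ * U = 1 ∧ ρB = U * ρA * Uᴴ := by
  constructor
  · rintro ⟨R, ⟨⟨hRpsd, hRtr⟩, hTrB, hTrA⟩, hrank⟩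
    obtain ⟨ψ, rfl⟩ := QOTAux.psd_rank_one_decomp hRpsd hrank
    set M : Matrix (Fin n) (Fin n) ℂ := Matrix.of fun i p => ψ (i, p) with hM
    have hA' : ρA = M * Mᴴ := by
      rw [← hTrB]; exact (QOTAux.trB_vecMulVec M).symm
    have hB' : ρB = Mᵀ * (Mᵀ)ᴴ := by
      rw [← hTrA]; exact (QOTAux.trA_vecMulVec M).symm
    have hcp : ρA.charpoly = ρB.charpoly := by
      rw [hA', hB']
      have h1 : Mᵀ * (Mᵀ)ᴴ = (Mᴴ * M)ᵀ := by
        rw [Matrix.transpose_mul, show (Mᴴ)ᵀ = (Mᵀ)ᴴ from rfl]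
      rw [h1, QOTAux.charpoly_transpose, QOTAux.charpoly_mul_comm]
    exact QOTAux.hermitian_similar_of_charpoly hA.1.1 hB.1.1 hcp
  · rintro ⟨U, hU, hBA⟩
    have hH := hA.1.1
    set P : Matrix (Fin n) (Fin n) ℂ := (hH.eigenvectorUnitary : Matrix (Fin n) (Fin n) ℂ)
      with hP
    set d : Matrix (Fin n) (Fin n) ℂ := diagonal (fun i => (Real.sqrt (hH.eigenvalues i) : ℂ))
      with hd
    set M : Matrix (Fin n) (Fin n) ℂ := P * d * Pᵀ * Uᵀ with hMdef
    set ψ : Fin n × Fin n → ℂ := fun x : Fin n × Fin n => M x.1 x.2 with hψ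
    have cancel : ∀ {X Y : Matrix (Fin n) (Fin n) ℂ} (Z : Matrix (Fin n) (Fin n) ℂ),
        X * Y = 1 → X * (Y * Z) = Z := by
      intro X Y Z hXY; rw [← Matrix.mul_assoc, hXY, Matrix.one_mul]
    have hPl : Pᴴ * P = 1 := by
      simpa [Matrix.star_eq_conjTranspose] using Matrix.mem_unitaryGroup_iff'.mp
        hH.eigenvectorUnitary.2
    have hdH : dᴴ = d := by
      rw [hd, Matrix.diagonal_conjTranspose]
      refine congrArg Matrix.diagonal (funext fun i => ?_)
      exact Complex.conj_ofReal _
    have hdT : dᵀ = d := by rw [hd, Matrix.diagonal_transpose]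
    have hdd : d * d = diagonal (RCLike.ofReal ∘ hH.eigenvalues) := by
      rw [hd, Matrix.diagonal_mul_diagonal]
      refine congrArg Matrix.diagonal (funext fun i => ?_)
      rw [← Complex.ofReal_mul, Real.mul_self_sqrt (hA.1.eigenvalues_nonneg i)]
      rfl
    have htP : Pᵀ * (Pᵀ)ᴴ = 1 := by
      calc Pᵀ * (Pᵀ)ᴴ = Pᵀ * (Pᴴ)ᵀ := by rw [show (Pᵀ)ᴴ = (Pᴴ)ᵀ from rfl]
        _ = (Pᴴ * P)ᵀ := by rw [Matrix.transpose_mul]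
        _ = 1 := by rw [hPl, Matrix.transpose_one]
    have htU : Uᵀ * (Uᵀ)ᴴ = 1 := by
      calc Uᵀ * (Uᵀ)ᴴ = Uᵀ * (Uᴴ)ᵀ := by rw [show (Uᵀ)ᴴ = (Uᴴ)ᵀ from rfl]
        _ = (Uᴴ * U)ᵀ := by rw [Matrix.transpose_mul]
        _ = 1 := by rw [hU, Matrix.transpose_one]
    have hspec : ρA = P * (d * d) * Pᴴ := by
      rw [hdd]
      conv_lhs => rw [hH.spectral_theorem]
      rw [Unitary.conjStarAlgAut_apply, Matrix.star_eq_conjTranspose]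
    have hMMH : M * Mᴴ = ρA := by
      rw [hMdef]
      simp only [Matrix.conjTranspose_mul, Matrix.mul_assoc]
      rw [cancel _ htU, cancel _ htP, hdH, hspec]
      simp only [Matrix.mul_assoc]
    have hMtEq : Mᵀ = U * (P * (d * Pᵀ)) := by
      rw [hMdef]
      simp only [Matrix.transpose_mul, Matrix.transpose_transpose, hdT, Matrix.mul_assoc]
    have hMt : Mᵀ * (Mᵀ)ᴴ = ρB := by
      rw [hMtEq]
      simp only [Matrix.conjTranspose_mul, hdH, Matrix.mul_assoc]
      rw [cancel _ htP, hBA, hspec]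
      simp only [Matrix.mul_assoc]
    have hψne : ψ ≠ 0 := by
      intro h0
      have hM0 : M = 0 := by
        ext i p
        exact congrFun h0 (i, p)
      have h1 : ρA.trace = 0 := by
        rw [← hMMH, hM0]
        simp
      rw [hA.2] at h1
      exact one_ne_zero h1
    refine ⟨vecMulVec ψ (star ψ), ⟨⟨QOTAux.posSemidef_vecMulVec_star ψ, ?_⟩, ?_, ?_⟩, ?_⟩
    · rw [hψ, QOTAux.trace_vecMulVec M, hMMH, hA.2]
    · rw [hψ, QOTAux.trB_vecMulVec M, hMMH]
    · rw [hψ, QOTAux.trA_vecMulVec M, hMt]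
    · exact QOTAux.rank_vecMulVec_star ψ hψne
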